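/- For every integer d ≥ 2, the equation (d+1)(1-x) + (1+dx)·ln(x) = 0 has a unique root x* in the open interval (0,1). -/

import Mathlib

open Real Set

/-- For every integer `d ≥ 2`, the equation `(d+1)(1-x) + (1+dx)·ln x = 0`
has a unique root `x*` in the open interval `(0,1)`. -/
theorem unique_root_in_Ioo (d : ℕ) (hd : 2 ≤ d) :
    ∃! x : ℝ, x ∈ Set.Ioo (0:ℝ) 1 ∧
      ((d:ℝ) + 1) * (1 - x) + (1 + (d:ℝ) * x) * Real.log x = 0 := by
  set D : ℝ := (d : ℝ) with hDdef
  have hD : (2:ℝ) ≤ D := by rw [hDdef]; exact_mod_cast hd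
  have hD0 : (0:ℝ) < D := by linarith
  set φ : ℝ → ℝ := fun x => Real.log x + (D+1)*(1-x)/(1+D*x) with hφdef
  have hden : ∀ x : ℝ, 0 < x → (0:ℝ) < 1 + D*x := fun x hx => by nlinarith
  have hderiv : ∀ x : ℝ, 0 < x →
      HasDerivAt φ (1/x - (D+1)^2/(1+D*x)^2) x := by
    intro x hx
    have hdx := hden x hx
    have h1 : HasDerivAt Real.log x⁻¹ x := Real.hasDerivAt_log hx.ne'
    have h2 : HasDerivAt (fun y : ℝ => (D+1)*(1-y)) (-(D+1)) x := by
      simpa using ((hasDerivAt_id x).const_sub (1:ℝ)).const_mul (D+1)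
    have h3 : HasDerivAt (fun y : ℝ => 1 + D*y) D x := by
      simpa using ((hasDerivAt_id x).const_mul D).const_add (1:ℝ)
    have h4 := h2.div h3 hdx.ne'
    have h5 := h1.add h4
    refine HasDerivAt.congr_deriv (f := φ) h5 ?_
    field_simp [hx.ne', hdx.ne']
    ring
  set c : ℝ := (D^2)⁻¹ with hcdef
  have hc0 : (0:ℝ) < c := by positivity
  have hc1 : c < 1 := by
    rw [hcdef]
    apply inv_lt_one_of_one_lt₀
    nlinarith
  have hDD : D^2 * (D^2)⁻¹ = 1 := mul_inv_cancel₀ (by positivity)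
  -- strict monotone on (0, c]
  have hmono : StrictMonoOn φ (Ioc 0 c) := by
    apply strictMonoOn_of_deriv_pos (convex_Ioc 0 c)
    · intro x hx
      exact (hderiv x hx.1).differentiableAt.continuousAt.continuousWithinAt
    · intro x hx
      rw [interior_Ioc] at hx
      rw [(hderiv x hx.1).deriv]
      have hx0 := hx.1
      have hdx := hden x hx0
      have h5 : D^2 * x < 1 := by nlinarith [hx.2]
      have hx1 : x < 1 := lt_trans hx.2 hc1
      rw [sub_pos, div_lt_div_iff₀ (by positivity) hx0]
      nlinarith [mul_pos (sub_pos.2 h5) (sub_pos.2 hx1)]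
  -- strict anti on [c, 1]
  have hanti : StrictAntiOn φ (Icc c 1) := by
    apply strictAntiOn_of_deriv_neg (convex_Icc c 1)
    · intro x hx
      exact (hderiv x (lt_of_lt_of_le hc0 hx.1)).differentiableAt.continuousAt.continuousWithinAt
    · intro x hx
      rw [interior_Icc] at hx
      have hx0 : 0 < x := lt_trans hc0 hx.1
      rw [(hderiv x hx0).deriv]
      have hdx := hden x hx0
      have h5 : 1 < D^2 * x := by nlinarith [hx.1]
      rw [sub_neg, div_lt_div_iff₀ hx0 (by positivity)]
      nlinarith [mul_pos (sub_pos.2 h5) (sub_pos.2 hx.2)]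
  have hφ1 : φ 1 = 0 := by simp [hφdef]
  -- φ c > 0
  have hcne : (1:ℝ) + D * (D^2)⁻¹ ≠ 0 := (hden _ hc0).ne'
  have hc_eq : φ c = (D^2-1)/D - 2*Real.log D := by
    rw [hφdef, hcdef]
    simp only
    rw [Real.log_inv, Real.log_pow]
    push_cast
    field_simp
    ring
  have hlogD : Real.log D ≤ Real.log 2 + (D/2 - 1) := by
    have h := Real.log_le_sub_one_of_pos (show (0:ℝ) < D/2 by linarith)
    rw [Real.log_div (by linarith) two_ne_zero] at h
    linarith
  have hlog2 : Real.log 2 < 0.6931471808 := Real.log_two_lt_d9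
  have hφc : 0 < φ c := by
    rw [hc_eq, sub_pos, lt_div_iff₀ hD0]
    nlinarith [mul_le_mul_of_nonneg_left hlogD (show (0:ℝ) ≤ 2*D by linarith),
      mul_lt_mul_of_pos_left hlog2 (show (0:ℝ) < 2*D by linarith)]
  -- the left point a
  set a : ℝ := min (Real.exp (-(D+1))) ((2*D^2)⁻¹) with hadef
  have ha0 : 0 < a := lt_min (Real.exp_pos _) (by positivity)
  have hac : a < c := by
    have h1 : a ≤ (2*D^2)⁻¹ := min_le_right _ _
    have h2 : (2*D^2)⁻¹ < (D^2)⁻¹ := by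
      apply inv_strictAnti₀ (by positivity)
      nlinarith
    exact lt_of_le_of_lt h1 h2
  have hloga : Real.log a ≤ -(D+1) := by
    have h1 : Real.log a ≤ Real.log (Real.exp (-(D+1))) :=
      Real.log_le_log ha0 (min_le_left _ _)
    rwa [Real.log_exp] at h1
  have hφa : φ a < 0 := by
    have hdx := hden a ha0
    have h1 : (D+1)*(1-a)/(1+D*a) < D+1 := by
      rw [div_lt_iff₀ hdx]
      nlinarith
    have h2 : φ a = Real.log a + (D+1)*(1-a)/(1+D*a) := rfl
    rw [h2]
    linarith
  -- existence via IVT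
  have hcont : ContinuousOn φ (Icc a c) := fun x hx =>
    (hderiv x (lt_of_lt_of_le ha0 hx.1)).differentiableAt.continuousAt.continuousWithinAt
  obtain ⟨x0, hx0mem, hx0⟩ := intermediate_value_Icc hac.le hcont ⟨hφa.le, hφc.le⟩
  have hx0pos : 0 < x0 := lt_of_lt_of_le ha0 hx0mem.1
  have hx0lt1 : x0 < 1 := lt_of_le_of_lt hx0mem.2 hc1
  -- relation between g and φ
  have hgφ : ∀ x : ℝ, 0 < x →
      ((D+1)*(1-x) + (1+D*x)*Real.log x = 0 ↔ φ x = 0) := by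
    intro x hx
    have hdx := (hden x hx).ne'
    have heq : (D+1)*(1-x) + (1+D*x)*Real.log x = (1+D*x) * φ x := by
      rw [hφdef]
      field_simp
      ring
    rw [heq, mul_eq_zero]
    simp [hdx]
  -- any root in (0,1) is ≤ c
  have hroot_le : ∀ z, z ∈ Ioo (0:ℝ) 1 → φ z = 0 → z ≤ c := by
    intro z hz hφz
    by_contra h
    push_neg at h
    have h1 := hanti (mem_Icc.2 ⟨h.le, hz.2.le⟩) (mem_Icc.2 ⟨hc1.le, le_refl 1⟩) hz.2
    rw [hφ1, hφz] at h1
    exact lt_irrefl 0 h1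
  refine ⟨x0, ⟨⟨hx0pos, hx0lt1⟩, (hgφ x0 hx0pos).2 hx0⟩, ?_⟩
  rintro y ⟨hy, hgy⟩
  have hφy : φ y = 0 := (hgφ y hy.1).1 hgy
  exact hmono.injOn ⟨hy.1, hroot_le y hy hφy⟩
    ⟨hx0pos, hx0mem.2⟩ (by rw [hφy, hx0])
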